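/- Let G < q ≤ q_f, where G = (1+√5)/2 and q_f is the root in (1,2) of x³ = 2x² − x + 1. If x ∈ [0,1/(q-1)] has a unique expansion (a_n)_{n≥1} in base q, then (a_n) belongs to the set {0^k(10)^∞, 1^k(01)^∞, 0^∞, 1^∞ : k ≥ 0}, i.e., (a_n) is either the all-zero sequence, the all-one sequence, or consists of a (possibly empty) constant prefix 0^k followed by the periodic tail (10)^∞, or a constant prefix 1^k followed by the periodic tail (01)^∞. -/

import Mathlib

noncomputable section

/-- `a` is an expansion of `x` in base `q`: all digits `a n` lie in `{0,1}` and
`x = Σ_{n≥1} a_n q^{-n}` (here `a n` is the `(n+1)`-st digit, i.e. indexing is 0-based). -/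
def IsExpansion (q x : ℝ) (a : ℕ → ℕ) : Prop :=
  (∀ n, a n ≤ 1) ∧ x = ∑' n : ℕ, (a n : ℝ) / q ^ (n + 1)

/-- The set of expansions of `x` in base `q`. -/
def expansionsOf (q x : ℝ) : Set (ℕ → ℕ) := {a | IsExpansion q x a}

/-- `U_q`: the set of `x ∈ [0, 1/(q-1)]` having a unique expansion in base `q`. -/
def uniqueExpansionSet (q : ℝ) : Set ℝ :=
  {x | x ∈ Set.Icc 0 (1 / (q - 1)) ∧ ∃! a, IsExpansion q x a}

/-- `B_m` (for finite `m`): bases `q ∈ (G, 2)` for which some `x ∈ I_q` has exactly `m`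
expansions in base `q`. -/
def B (m : ℕ) : Set ℝ :=
  {q | q ∈ Set.Ioo ((1 + Real.sqrt 5) / 2) 2 ∧
    ∃ x ∈ Set.Icc (0:ℝ) (1 / (q - 1)), Cardinal.mk (expansionsOf q x) = m}

/-- `B_{ℵ₀}`: bases `q ∈ (G, 2)` for which some `x ∈ I_q` has exactly countably infinitely
many expansions in base `q`. -/
def Baleph0 : Set ℝ :=
  {q | q ∈ Set.Ioo ((1 + Real.sqrt 5) / 2) 2 ∧
    ∃ x ∈ Set.Icc (0:ℝ) (1 / (q - 1)), Cardinal.mk (expansionsOf q x) = Cardinal.aleph0}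

/-- The Thue–Morse sequence: `thueMorse n` is the parity of the number of 1s in the
binary expansion of `n`. -/
def thueMorse (n : ℕ) : ℕ := ((Nat.digits 2 n).count 1) % 2

/-- A digit `a m` of an expansion of `x` in base `q` is forced if every expansion of `x`
agreeing with `a` before position `m` also agrees at position `m`. -/
def Forced (q x : ℝ) (a : ℕ → ℕ) (m : ℕ) : Prop :=
  ∀ c : ℕ → ℕ, IsExpansion q x c → (∀ i < m, c i = a i) → c m = a m

namespace Stmt2Aux

variable {q : ℝ}

lemma summable_digits (hq1 : 1 < q) {b : ℕ → ℕ} (hb : ∀ n, b n ≤ 1) :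
    Summable (fun n => (b n : ℝ) / q ^ (n + 1)) := by
  have hq0 : 0 < q := by linarith
  have hr0 : (0:ℝ) ≤ 1/q := by positivity
  have hr1 : 1/q < 1 := by rw [div_lt_one hq0]; exact hq1
  have hg : Summable (fun n : ℕ => (1/q)^(n+1)) := by
    have h := (summable_geometric_of_lt_one hr0 hr1).mul_left (1/q)
    refine h.congr fun n => by ring
  refine Summable.of_nonneg_of_le (fun n => by positivity) (fun n => ?_) hg
  have h1 : (b n : ℝ) ≤ 1 := by exact_mod_cast hb n
  have h2 : ((1:ℝ)/q)^(n+1) = 1/q^(n+1) := by rw [div_pow, one_pow]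
  rw [h2]
  gcongr

lemma tsum_geom_val (hq1 : 1 < q) : ∑' n : ℕ, ((1:ℝ)/q)^(n+1) = 1/(q-1) := by
  have hq0 : 0 < q := by linarith
  have hr0 : (0:ℝ) ≤ 1/q := by positivity
  have hr1 : 1/q < 1 := by rw [div_lt_one hq0]; exact hq1
  have h := tsum_geometric_of_lt_one hr0 hr1
  calc ∑' n : ℕ, ((1:ℝ)/q)^(n+1) = ∑' n : ℕ, (1/q) * (1/q)^n := by
        exact tsum_congr fun n => by ring
    _ = (1/q) * ∑' n : ℕ, ((1:ℝ)/q)^n := tsum_mul_left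
    _ = (1/q) * (1 - 1/q)⁻¹ := by rw [h]
    _ = 1/(q-1) := by
        have hq' : q ≠ 0 := by linarith
        have hq'' : q - 1 ≠ 0 := by linarith
        field_simp

lemma tsum_le_bound (hq1 : 1 < q) {b : ℕ → ℕ} (hb : ∀ n, b n ≤ 1) :
    ∑' n, (b n : ℝ) / q ^ (n + 1) ≤ 1/(q-1) := by
  have hq0 : 0 < q := by linarith
  rw [← tsum_geom_val hq1]
  refine Summable.tsum_le_tsum (fun n => ?_) (summable_digits hq1 hb) ?_
  · have h1 : (b n : ℝ) ≤ 1 := by exact_mod_cast hb n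
    have h2 : ((1:ℝ)/q)^(n+1) = 1/q^(n+1) := by rw [div_pow, one_pow]
    rw [h2]; gcongr
  · have h := (summable_geometric_of_lt_one (by positivity : (0:ℝ) ≤ 1/q)
      (by rw [div_lt_one hq0]; exact hq1)).mul_left (1/q)
    exact h.congr fun n => by ring

lemma tsum_digits_nonneg (hq1 : 1 < q) (b : ℕ → ℕ) :
    0 ≤ ∑' n, (b n : ℝ) / q ^ (n + 1) := by
  have hq0 : 0 < q := by linarith
  exact tsum_nonneg fun n => by positivity

lemma shift (hq1 : 1 < q) {b : ℕ → ℕ} (hb : ∀ n, b n ≤ 1) :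
    ∑' n, (b n : ℝ) / q ^ (n + 1)
      = ((b 0 : ℝ) + ∑' n, (b (n+1) : ℝ) / q ^ (n + 1)) / q := by
  have hq0 : 0 < q := by linarith
  have hs := summable_digits hq1 hb
  rw [Summable.tsum_eq_zero_add hs]
  have h1 : ∑' n : ℕ, (b (n+1) : ℝ) / q ^ (n + 1 + 1)
      = (1/q) * ∑' n : ℕ, (b (n+1) : ℝ) / q ^ (n + 1) := by
    rw [← tsum_mul_left]
    exact tsum_congr fun n => by rw [pow_succ]; ring
  rw [h1]
  ring

lemma exists_expansion (hq1 : 1 < q) (hq2 : q < 2) {z : ℝ}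
    (hz0 : 0 ≤ z) (hz1 : z ≤ 1/(q-1)) :
    ∃ c : ℕ → ℕ, (∀ n, c n ≤ 1) ∧ z = ∑' n, (c n : ℝ) / q ^ (n + 1) := by
  have hq0 : 0 < q := by linarith
  have hq1' : (0:ℝ) < q - 1 := by linarith
  classical
  let r : ℕ → ℝ := fun n =>
    Nat.rec z (fun _ rn => if 1 ≤ q * rn then q * rn - 1 else q * rn) n
  let c : ℕ → ℕ := fun n => if 1 ≤ q * r n then 1 else 0
  have hrstep : ∀ n, r (n+1) = if 1 ≤ q * r n then q * r n - 1 else q * r n :=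
    fun n => rfl
  have hrc : ∀ n, r (n+1) = q * r n - c n := by
    intro n
    rw [hrstep n]
    by_cases h : 1 ≤ q * r n <;> simp [c, h]
  have hinv : ∀ n, 0 ≤ r n ∧ r n ≤ 1/(q-1) := by
    intro n
    induction n with
    | zero => exact ⟨hz0, hz1⟩
    | succ n ih =>
      rw [hrstep n]
      by_cases h : 1 ≤ q * r n
      · rw [if_pos h]
        constructor
        · linarith
        · have h2 : q * r n ≤ q * (1/(q-1)) := by
            have := ih.2
            nlinarith
          have h3 : q * (1/(q-1)) - 1 = 1/(q-1) := by field_simp; ring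
          linarith
      · rw [if_neg h]
        push_neg at h
        constructor
        · nlinarith [ih.1]
        · have h4 : (1:ℝ) ≤ 1/(q-1) := by
            rw [le_div_iff₀ hq1']; linarith
          linarith
  have hc1 : ∀ n, c n ≤ 1 := by
    intro n; dsimp only [c]; split <;> norm_num
  have hps : ∀ n, ∑ i ∈ Finset.range n, (c i : ℝ)/q^(i+1) = z - r n / q^n := by
    intro n
    induction n with
    | zero => simp [r]
    | succ n ih =>
      rw [Finset.sum_range_succ, ih, hrc n, pow_succ]
      have hqn : q ^ n ≠ 0 := by positivity
      field_simp
      ring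
  have hsum := summable_digits hq1 hc1
  have htz : Filter.Tendsto (fun n : ℕ => r n / q^n) Filter.atTop (nhds 0) := by
    have hb : ∀ n : ℕ, r n / q ^ n ≤ (1/(q-1)) * (1/q)^n := by
      intro n
      have h1 : (1/(q-1)) * ((1:ℝ)/q)^n = (1/(q-1))/q^n := by
        rw [div_pow, one_pow, mul_one_div]
      rw [h1]
      gcongr
      exact (hinv n).2
    have hg : Filter.Tendsto (fun n : ℕ => (1/(q-1)) * (1/q)^n) Filter.atTop (nhds 0) := by
      have := (tendsto_pow_atTop_nhds_zero_of_lt_one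
        (by positivity : (0:ℝ) ≤ 1/q)
        (by rw [div_lt_one hq0]; exact hq1)).const_mul (1/(q-1))
      simpa using this
    exact squeeze_zero (fun n => by have := (hinv n).1; positivity) hb hg
  have h2 : Filter.Tendsto (fun n : ℕ => z - r n / q ^ n) Filter.atTop (nhds z) := by
    have := Filter.Tendsto.const_sub z htz
    simpa using this
  have h3 : Filter.Tendsto (fun n : ℕ => ∑ i ∈ Finset.range n, (c i : ℝ)/q^(i+1))
      Filter.atTop (nhds z) :=
    h2.congr (fun n => (hps n).symm)
  exact ⟨c, hc1, tendsto_nhds_unique h3 hsum.hasSum.tendsto_sum_nat⟩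

end Stmt2Aux

theorem stmt2 (qf : ℝ) (hqf : qf ∈ Set.Ioo (1:ℝ) 2)
    (hqfeq : qf ^ 3 = 2 * qf ^ 2 - qf + 1)
    (q : ℝ) (hqG : (1 + Real.sqrt 5) / 2 < q) (hqqf : q ≤ qf)
    (x : ℝ) (hx : x ∈ Set.Icc (0:ℝ) (1 / (q - 1)))
    (a : ℕ → ℕ) (ha : IsExpansion q x a)
    (huniq : ∀ b, IsExpansion q x b → b = a) :
    (∀ n, a n = 0) ∨ (∀ n, a n = 1) ∨
      (∃ k, (∀ n < k, a n = 0) ∧ ∀ n, k ≤ n → a n = (n - k + 1) % 2) ∨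
      (∃ k, (∀ n < k, a n = 1) ∧ ∀ n, k ≤ n → a n = (n - k) % 2) := by
  classical
  -- basic numeric facts
  have h5 : (2:ℝ) < Real.sqrt 5 := by
    nlinarith [Real.sq_sqrt (show (0:ℝ) ≤ 5 by norm_num), Real.sqrt_nonneg 5]
  have hq1 : 1 < q := by
    have : (1:ℝ) + 2 < 1 + Real.sqrt 5 := by linarith
    linarith [hqG]
  have hq2 : q < 2 := lt_of_le_of_lt hqqf hqf.2
  have hq0 : (0:ℝ) < q := by linarith
  have hqm1 : (0:ℝ) < q - 1 := by linarith
  have hp : q^3 - 2*q^2 + q - 1 ≤ 0 := by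
    nlinarith [sq_nonneg (q - 1), sq_nonneg (qf - 1), sub_nonneg.2 hqqf,
      mul_nonneg (sub_nonneg.2 hqqf) (sq_nonneg (q-1)),
      mul_nonneg (sub_nonneg.2 hqqf) (sq_nonneg (qf-1)),
      mul_nonneg (sub_nonneg.2 hqqf) (mul_pos (show (0:ℝ) < q*qf - 1 by nlinarith [hqf.1]) one_pos).le]
  -- tail values
  set y : ℕ → ℝ := fun n => ∑' j : ℕ, (a (n + j) : ℝ) / q ^ (j + 1) with hy
  have hatail : ∀ n j, a (n + j) ≤ 1 := fun n j => ha.1 _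
  have hy0 : x = y 0 := by
    rw [ha.2, hy]
    exact tsum_congr fun j => by rw [Nat.zero_add]
  have hyshift : ∀ n, y n = ((a n : ℝ) + y (n+1)) / q := by
    intro n
    have h := Stmt2Aux.shift hq1 (hatail n)
    have e : (fun j => ((a (n + (j+1)) : ℕ) : ℝ) / q ^ (j+1))
        = fun j => ((a ((n+1) + j) : ℕ) : ℝ) / q ^ (j+1) := by
      funext j
      have : n + (j + 1) = (n + 1) + j := by omega
      rw [this]
    rw [hy]
    rw [e] at h
    exact h
  have hynn : ∀ n, 0 ≤ y n := fun n => Stmt2Aux.tsum_digits_nonneg hq1 _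
  have hyub : ∀ n, y n ≤ 1/(q-1) := fun n => Stmt2Aux.tsum_le_bound hq1 (hatail n)
  -- replacement lemma
  have hrepl : ∀ n (c : ℕ → ℕ), (∀ i, c i ≤ 1) → y n = ∑' j, (c j : ℝ)/q^(j+1) →
      IsExpansion q x (fun i => if i < n then a i else c (i - n)) := by
    intro n
    induction n with
    | zero =>
      intro c hc1 hcs
      have he : (fun i => if i < 0 then a i else c (i - 0)) = c := by
        funext i; simp
      rw [he]
      exact ⟨hc1, by rw [hy0, hcs]⟩
    | succ n ih =>
      intro c hc1 hcs
      set c' : ℕ → ℕ := fun i => if i = 0 then a n else c (i - 1) with hc'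
      have hc'1 : ∀ i, c' i ≤ 1 := by
        intro i; dsimp only [c']; split
        · exact ha.1 n
        · exact hc1 _
      have hc's : y n = ∑' j, (c' j : ℝ)/q^(j+1) := by
        rw [Stmt2Aux.shift hq1 hc'1]
        have e : (fun j => ((c' (j+1) : ℕ):ℝ)/q^(j+1)) = fun j => ((c j : ℕ):ℝ)/q^(j+1) := by
          funext j; simp [c']
        rw [e, ← hcs]
        have : (c' 0 : ℝ) = (a n : ℝ) := by simp [c']
        rw [this, ← hyshift n]
      have h := ih c' hc'1 hc's
      have he : (fun i => if i < n then a i else c' (i - n))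
          = (fun i => if i < n + 1 then a i else c (i - (n+1))) := by
        funext i
        rcases lt_trichotomy i n with h1 | h1 | h1
        · rw [if_pos h1, if_pos (by omega)]
        · subst h1
          rw [if_neg (lt_irrefl i), if_pos (by omega)]
          simp [c']
        · rw [if_neg (by omega), if_neg (by omega)]
          have e0 : i - n ≠ 0 := by omega
          simp only [c', if_neg e0]
          have e1 : i - n - 1 = i - (n+1) := by omega
          rw [e1]
      rwa [he] at h
  -- forcing lemmas
  have L1 : ∀ n, a n = 1 → (2 - q)/(q - 1) < y (n+1) := by
    intro n h1
    by_contra hle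
    push_neg at hle
    have hz0 : 0 ≤ y (n+1) + 1 := by linarith [hynn (n+1)]
    have hz1 : y (n+1) + 1 ≤ 1/(q-1) := by
      have he : (2-q)/(q-1) + 1 = 1/(q-1) := by field_simp; ring
      linarith
    obtain ⟨c, hc1, hcs⟩ := Stmt2Aux.exists_expansion hq1 hq2 hz0 hz1
    set d : ℕ → ℕ := fun i => if i = 0 then 0 else c (i - 1) with hd
    have hd1 : ∀ i, d i ≤ 1 := by
      intro i; dsimp only [d]; split
      · omega
      · exact hc1 _
    have hds : y n = ∑' j, (d j : ℝ)/q^(j+1) := by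
      rw [Stmt2Aux.shift hq1 hd1]
      have e : (fun j => ((d (j+1) : ℕ):ℝ)/q^(j+1)) = fun j => ((c j : ℕ):ℝ)/q^(j+1) := by
        funext j; simp [d]
      rw [e, ← hcs]
      have h0 : (d 0 : ℝ) = 0 := by simp [d]
      rw [h0, hyshift n, h1]
      push_cast
      ring
    have hb := hrepl n d hd1 hds
    have heq := congrFun (huniq _ hb) n
    simp only [lt_irrefl, if_neg (lt_irrefl n), Nat.sub_self] at heq
    rw [h1] at heq
    simp [d] at heq
  have L2 : ∀ n, a n = 0 → y (n+1) < 1 := by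
    intro n h1
    by_contra hle
    push_neg at hle
    have hz0 : 0 ≤ y (n+1) - 1 := by linarith
    have hz1 : y (n+1) - 1 ≤ 1/(q-1) := by linarith [hyub (n+1)]
    obtain ⟨c, hc1, hcs⟩ := Stmt2Aux.exists_expansion hq1 hq2 hz0 hz1
    set d : ℕ → ℕ := fun i => if i = 0 then 1 else c (i - 1) with hd
    have hd1 : ∀ i, d i ≤ 1 := by
      intro i; dsimp only [d]; split
      · omega
      · exact hc1 _
    have hds : y n = ∑' j, (d j : ℝ)/q^(j+1) := by
      rw [Stmt2Aux.shift hq1 hd1]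
      have e : (fun j => ((d (j+1) : ℕ):ℝ)/q^(j+1)) = fun j => ((c j : ℕ):ℝ)/q^(j+1) := by
        funext j; simp [d]
      rw [e, ← hcs]
      have h0 : (d 0 : ℝ) = 1 := by simp [d]
      rw [h0, hyshift n, h1]
      push_cast
      ring
    have hb := hrepl n d hd1 hds
    have heq := congrFun (huniq _ hb) n
    simp only [lt_irrefl, if_neg (lt_irrefl n), Nat.sub_self] at heq
    rw [h1] at heq
    simp [d] at heq
  -- forbidden factors
  have h100 : ∀ n, ¬(a n = 1 ∧ a (n+1) = 0 ∧ a (n+2) = 0) := by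
    rintro n ⟨h1, h2, h3⟩
    have e1 := L1 n h1
    have e3 := L2 (n+2) h3
    have s1 : q^2 * y (n+1) = y (n+3) := by
      rw [hyshift (n+1), h2, hyshift (n+2), h3]
      push_cast
      field_simp
      ring
    have e1' : 2 - q < y (n+1) * (q - 1) := (div_lt_iff₀ hqm1).1 e1
    nlinarith [mul_pos (show (0:ℝ) < q^2 by positivity) (sub_pos.2 e1'),
      hynn (n+3)]
  have h011 : ∀ n, ¬(a n = 0 ∧ a (n+1) = 1 ∧ a (n+2) = 1) := by
    rintro n ⟨h1, h2, h3⟩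
    have e1 := L2 n h1
    have e3 := L1 (n+2) h3
    have s1 : q^2 * y (n+1) = q + 1 + y (n+3) := by
      rw [hyshift (n+1), h2, hyshift (n+2), h3]
      push_cast
      field_simp
      ring
    have e3' : 2 - q < y (n+3) * (q - 1) := (div_lt_iff₀ hqm1).1 e3
    nlinarith [mul_pos hqm1 (show (0:ℝ) < q^2 - q - 1 - y (n+3) by nlinarith)]
  -- combinatorics
  have hdig : ∀ n, a n = 0 ∨ a n = 1 := fun n => by have := ha.1 n; omega
  rcases hdig 0 with h00 | h01
  · by_cases hz : ∀ n, a n = 0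
    · exact Or.inl hz
    · right; right; left
      push_neg at hz
      obtain ⟨m, hm⟩ := hz
      have hex : ∃ n, a n = 1 := ⟨m, by rcases hdig m with h | h; exact absurd h hm; exact h⟩
      set k := Nat.find hex with hkdef
      have hk1 : a k = 1 := Nat.find_spec hex
      have hkmin : ∀ n < k, a n = 0 := by
        intro n hn
        have := Nat.find_min hex hn
        rcases hdig n with h | h
        · exact h
        · exact absurd h this
      have hkpos : 0 < k := by
        rcases Nat.eq_zero_or_pos k with h | h
        · rw [h] at hk1; omega
        · exact h
      have hpair : ∀ j, a (k + 2*j) = 1 ∧ a (k + 2*j + 1) = 0 := by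
        intro j
        induction j with
        | zero =>
          constructor
          · simpa using hk1
          · rcases hdig (k + 2*0 + 1) with h | h
            · exact h
            · exfalso
              apply h011 (k - 1)
              refine ⟨hkmin (k-1) (by omega), ?_, ?_⟩
              · have e : k - 1 + 1 = k := by omega
                rw [e]; exact hk1
              · have e : k - 1 + 2 = k + 2*0 + 1 := by omega
                rw [e]; exact h
        | succ j ih =>
          obtain ⟨i1, i0⟩ := ih
          have hn1 : a (k + 2*j + 2) = 1 := by
            rcases hdig (k + 2*j + 2) with h | h
            · exact absurd ⟨i1, i0, h⟩ (h100 (k + 2*j))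
            · exact h
          have hn0 : a (k + 2*j + 3) = 0 := by
            rcases hdig (k + 2*j + 3) with h | h
            · exact h
            · exact absurd ⟨i0, hn1, h⟩ (h011 (k + 2*j + 1))
          constructor
          · have e : k + 2*(j+1) = k + 2*j + 2 := by ring
            rw [e]; exact hn1
          · have e : k + 2*(j+1) + 1 = k + 2*j + 3 := by ring
            rw [e]; exact hn0
      refine ⟨k, hkmin, ?_⟩
      intro n hn
      rcases Nat.even_or_odd (n - k) with ⟨j, hj⟩ | ⟨j, hj⟩
      · have e : n = k + 2*j := by omega
        rw [e]
        have := (hpair j).1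
        omega
      · have e : n = k + 2*j + 1 := by omega
        rw [e]
        have := (hpair j).2
        omega
  · by_cases ho : ∀ n, a n = 1
    · exact Or.inr (Or.inl ho)
    · right; right; right
      push_neg at ho
      obtain ⟨m, hm⟩ := ho
      have hex : ∃ n, a n = 0 := ⟨m, by rcases hdig m with h | h; exact h; exact absurd h hm⟩
      set k := Nat.find hex with hkdef
      have hk0 : a k = 0 := Nat.find_spec hex
      have hkmin : ∀ n < k, a n = 1 := by
        intro n hn
        have := Nat.find_min hex hn
        rcases hdig n with h | h
        · exact absurd h this
        · exact h
      have hkpos : 0 < k := by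
        rcases Nat.eq_zero_or_pos k with h | h
        · rw [h] at hk0; omega
        · exact h
      have hpair : ∀ j, a (k + 2*j) = 0 ∧ a (k + 2*j + 1) = 1 := by
        intro j
        induction j with
        | zero =>
          constructor
          · simpa using hk0
          · rcases hdig (k + 2*0 + 1) with h | h
            · exfalso
              apply h100 (k - 1)
              refine ⟨hkmin (k-1) (by omega), ?_, ?_⟩
              · have e : k - 1 + 1 = k := by omega
                rw [e]; exact hk0
              · have e : k - 1 + 2 = k + 2*0 + 1 := by omega
                rw [e]; exact h
            · exact h
        | succ j ih =>
          obtain ⟨i0, i1⟩ := ih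
          have hn0 : a (k + 2*j + 2) = 0 := by
            rcases hdig (k + 2*j + 2) with h | h
            · exact h
            · exact absurd ⟨i0, i1, h⟩ (h011 (k + 2*j))
          have hn1 : a (k + 2*j + 3) = 1 := by
            rcases hdig (k + 2*j + 3) with h | h
            · exact absurd ⟨i1, hn0, h⟩ (h100 (k + 2*j + 1))
            · exact h
          constructor
          · have e : k + 2*(j+1) = k + 2*j + 2 := by ring
            rw [e]; exact hn0
          · have e : k + 2*(j+1) + 1 = k + 2*j + 3 := by ring
            rw [e]; exact hn1
      refine ⟨k, hkmin, ?_⟩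
      intro n hn
      rcases Nat.even_or_odd (n - k) with ⟨j, hj⟩ | ⟨j, hj⟩
      · have e : n = k + 2*j := by omega
        rw [e]
        have := (hpair j).1
        omega
      · have e : n = k + 2*j + 1 := by omega
        rw [e]
        have := (hpair j).2
        omega
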